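/- With the notation below, (1/n!) Σ_{r} e^{c_r} − e^{α + β/2} = (1/n!) ∫₀¹ f(u) · exp((1−u)α + (1−u²)β/2) du, where the sum is over all n-tuples r of pairwise distinct elements of {1,…,n} (i.e. all permutations), f(u) = f₁(u)/(4n) + f₂(u)/(n²(n−1)) + f₃(u)/(4n²(n−1)), f₁(u) = Σ_{(j,k), j≠k} Σ_r z_{j,k,r(j),r(k)} (1 − u z_{j,k,r(j),r(k)} − exp(−u z_{j,k,r(j),r(k)})) e^{u c_r}, f₂(u) = Σ_{(j,k,ℓ) pairwise distinct} Σ_r u z_{j,k,r(j),r(k)}² (1 − exp(u z_{j,ℓ,r(ℓ),r(j)})) e^{u c_r}, and f₃(u) = Σ_{(j,k,ℓ,m) pairwise distinct} Σ_r u z_{j,k,r(j),r(k)}² (1 − exp(u z_{j,ℓ,r(ℓ),r(j)} + u z_{k,m,r(m),r(k)})) e^{u c_r}. -/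

import Mathlib

open scoped BigOperators
namespace S12

open Finset

variable {n : ℕ}

def zz (x : Fin n → Fin n → ℂ) (j k r s : Fin n) : ℂ := x j r - x k r - x j s + x k s

lemma zz_rr (x : Fin n → Fin n → ℂ) (j k r : Fin n) : zz x j k r r = 0 := by
  simp [zz]

lemma zz_jj (x : Fin n → Fin n → ℂ) (j r s : Fin n) : zz x j j r s = 0 := by
  simp [zz]

lemma zz_sq_swap_rs (x : Fin n → Fin n → ℂ) (j k r s : Fin n) :
    (zz x j k s r) ^ 2 = (zz x j k r s) ^ 2 := by
  simp only [zz]; ring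

lemma zz_sq_swap_jk (x : Fin n → Fin n → ℂ) (j k r s : Fin n) :
    (zz x k j r s) ^ 2 = (zz x j k r s) ^ 2 := by
  simp only [zz]; ring

lemma sum_const_fin (c : ℂ) : ∑ _j : Fin n, c = (n : ℂ) * c := by
  simp [Finset.sum_const, Finset.card_univ, mul_comm]

lemma sum_prod_col (f g : Fin n → Fin n → ℂ) :
    ∑ j, ∑ k, ∑ r, f j r * g k r = ∑ r, (∑ j, f j r) * (∑ k, g k r) :=
  calc ∑ j, ∑ k, ∑ r, f j r * g k r
      = ∑ j, ∑ r, ∑ k, f j r * g k r :=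
        Finset.sum_congr rfl fun j _ => Finset.sum_comm
    _ = ∑ r, ∑ j, ∑ k, f j r * g k r := Finset.sum_comm
    _ = ∑ r, (∑ j, f j r) * (∑ k, g k r) := by
        refine Finset.sum_congr rfl fun r _ => ?_
        rw [Finset.sum_mul]
        exact Finset.sum_congr rfl fun j _ => (Finset.mul_sum _ _ _).symm

lemma sum_prod_row (f g : Fin n → Fin n → ℂ) :
    ∑ j, ∑ r, ∑ s, f j r * g j s = ∑ j, (∑ r, f j r) * (∑ s, g j s) := by
  refine Finset.sum_congr rfl fun j _ => ?_
  rw [Finset.sum_mul]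
  exact Finset.sum_congr rfl fun r _ => (Finset.mul_sum _ _ _).symm

lemma sum_sep (f g : Fin n → ℂ) : ∑ j, ∑ k, f j * g k = (∑ j, f j) * (∑ k, g k) := by
  rw [Finset.sum_mul]
  exact Finset.sum_congr rfl fun j _ => (Finset.mul_sum _ _ _).symm

lemma sumsq_diff (f : Fin n → ℂ) :
    ∑ j, ∑ k, (f j - f k) ^ 2
      = 2 * n * (∑ j, (f j) ^ 2) - 2 * (∑ j, f j) ^ 2 := by
  have h : ∀ j k, (f j - f k) ^ 2 = f j ^ 2 + f k ^ 2 - 2 * (f j * f k) := by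
    intro j k; ring
  calc ∑ j, ∑ k, (f j - f k) ^ 2
      = ∑ j, ∑ k, (f j ^ 2 + f k ^ 2 - 2 * (f j * f k)) := by
        exact Finset.sum_congr rfl fun j _ => Finset.sum_congr rfl fun k _ => h j k
    _ = ∑ j, ((n : ℂ) * f j ^ 2 + (∑ k, f k ^ 2) - 2 * (f j * ∑ k, f k)) := by
        refine Finset.sum_congr rfl fun j _ => ?_
        rw [Finset.sum_sub_distrib, Finset.sum_add_distrib, sum_const_fin, ← Finset.mul_sum,
          ← Finset.mul_sum]
    _ = ((n : ℂ) * ∑ j, f j ^ 2 + (n : ℂ) * (∑ k, f k ^ 2) - 2 * ((∑ j, f j) * ∑ k, f k)) := by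
        rw [Finset.sum_sub_distrib, Finset.sum_add_distrib, ← Finset.mul_sum, sum_const_fin,
          ← Finset.mul_sum, ← Finset.sum_mul]
    _ = 2 * n * (∑ j, (f j) ^ 2) - 2 * (∑ j, f j) ^ 2 := by ring

lemma S_expand (a : Fin n → Fin n → ℂ) :
    ∑ j, ∑ k, ∑ r, ∑ s, (zz a j k r s) ^ 2
      = 4 * n ^ 2 * (∑ j, ∑ r, (a j r) ^ 2)
        - 4 * n * (∑ r, (∑ j, a j r) ^ 2)
        - 4 * n * (∑ j, (∑ r, a j r) ^ 2)
        + 4 * (∑ j, ∑ r, a j r) ^ 2 := by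
  have step1 : ∀ j k, ∑ r, ∑ s, (zz a j k r s) ^ 2
      = 2 * n * (∑ r, (a j r - a k r) ^ 2) - 2 * (∑ r, (a j r - a k r)) ^ 2 := by
    intro j k
    rw [← sumsq_diff (fun r => a j r - a k r)]
    refine Finset.sum_congr rfl fun r _ => Finset.sum_congr rfl fun s _ => ?_
    simp only [zz]; ring
  calc ∑ j, ∑ k, ∑ r, ∑ s, (zz a j k r s) ^ 2
      = ∑ j, ∑ k, (2 * n * (∑ r, (a j r - a k r) ^ 2) - 2 * (∑ r, (a j r - a k r)) ^ 2) := by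
        exact Finset.sum_congr rfl fun j _ => Finset.sum_congr rfl fun k _ => step1 j k
    _ = 2 * n * (∑ j, ∑ k, ∑ r, (a j r - a k r) ^ 2)
        - 2 * (∑ j, ∑ k, ((∑ r, a j r) - (∑ r, a k r)) ^ 2) := by
        simp only [Finset.sum_sub_distrib, ← Finset.mul_sum]
    _ = 2 * n * (∑ r, ∑ j, ∑ k, (a j r - a k r) ^ 2)
        - 2 * (2 * n * (∑ j, (∑ r, a j r) ^ 2) - 2 * (∑ j, ∑ r, a j r) ^ 2) := by
        rw [sumsq_diff (fun j => ∑ r, a j r)]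
        congr 2
        calc ∑ j, ∑ k, ∑ r, (a j r - a k r) ^ 2
            = ∑ j, ∑ r, ∑ k, (a j r - a k r) ^ 2 :=
              Finset.sum_congr rfl fun j _ => Finset.sum_comm
          _ = ∑ r, ∑ j, ∑ k, (a j r - a k r) ^ 2 := Finset.sum_comm
    _ = 2 * n * (∑ r, (2 * n * (∑ j, (a j r) ^ 2) - 2 * (∑ j, a j r) ^ 2))
        - 2 * (2 * n * (∑ j, (∑ r, a j r) ^ 2) - 2 * (∑ j, ∑ r, a j r) ^ 2) := by
        congr 2
        exact Finset.sum_congr rfl fun r _ => sumsq_diff (fun j => a j r)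
    _ = 4 * n ^ 2 * (∑ r, ∑ j, (a j r) ^ 2)
        - 4 * n * (∑ r, (∑ j, a j r) ^ 2)
        - 4 * n * (∑ j, (∑ r, a j r) ^ 2)
        + 4 * (∑ j, ∑ r, a j r) ^ 2 := by
        rw [Finset.sum_sub_distrib, ← Finset.mul_sum, ← Finset.mul_sum]
        ring
    _ = _ := by rw [Finset.sum_comm]

lemma lemC_inner (x : Fin n → Fin n → ℂ) (j k : Fin n) :
    (∑ l, if j ≠ k ∧ j ≠ l ∧ k ≠ l then (zz x j k j k) ^ 2 - (zz x j k l k) ^ 2 else 0)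
      = ((n : ℂ) - 1) * (zz x j k j k) ^ 2 - ∑ l, (zz x j k l k) ^ 2 := by
  by_cases hjk : j = k
  · subst hjk
    simp [zz_jj]
  · have key : ∀ l, (if j ≠ k ∧ j ≠ l ∧ k ≠ l then (zz x j k j k) ^ 2 - (zz x j k l k) ^ 2 else 0)
        = ((zz x j k j k) ^ 2 - (zz x j k l k) ^ 2)
          - (if l = j then (zz x j k j k) ^ 2 - (zz x j k j k) ^ 2 else 0)
          - (if l = k then (zz x j k j k) ^ 2 - (zz x j k k k) ^ 2 else 0) := by
      intro l
      by_cases hlj : l = j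
      · subst hlj
        simp [hjk, Ne.symm hjk]
      · by_cases hlk : l = k
        · subst hlk
          simp [hjk, hlj]
        · have g : j ≠ k ∧ j ≠ l ∧ k ≠ l := ⟨hjk, Ne.symm hlj, Ne.symm hlk⟩
          rw [if_pos g, if_neg hlj, if_neg hlk]
          ring
    rw [Finset.sum_congr rfl fun l _ => key l]
    rw [Finset.sum_sub_distrib, Finset.sum_sub_distrib, Finset.sum_sub_distrib,
      sum_const_fin, Finset.sum_ite_eq', Finset.sum_ite_eq']
    simp only [Finset.mem_univ, if_true, zz_rr]
    ring

lemma lemD_inner (x : Fin n → Fin n → ℂ) (j k : Fin n) :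
    (∑ l, ∑ m, if j ≠ k ∧ j ≠ l ∧ j ≠ m ∧ k ≠ l ∧ k ≠ m ∧ l ≠ m then
        (zz x j k j k) ^ 2 - (zz x j k l m) ^ 2 else 0)
      = ((n : ℂ) - 1) * ((n : ℂ) - 4) * (zz x j k j k) ^ 2
        - (∑ l, ∑ m, (zz x j k l m) ^ 2)
        + (∑ m, (zz x j k j m) ^ 2) + (∑ m, (zz x j k k m) ^ 2)
        + (∑ l, (zz x j k l j) ^ 2) + (∑ l, (zz x j k l k) ^ 2) := by
  by_cases hjk : j = k
  · subst hjk
    simp [zz_jj]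
  · have stage1 : ∀ l, l ≠ j → l ≠ k →
        (∑ m, if j ≠ k ∧ j ≠ l ∧ j ≠ m ∧ k ≠ l ∧ k ≠ m ∧ l ≠ m then
            (zz x j k j k) ^ 2 - (zz x j k l m) ^ 2 else 0)
          = ((n : ℂ) - 3) * (zz x j k j k) ^ 2 - (∑ m, (zz x j k l m) ^ 2)
            + (zz x j k l j) ^ 2 + (zz x j k l k) ^ 2 := by
      intro l hlj hlk
      have key : ∀ m, (if j ≠ k ∧ j ≠ l ∧ j ≠ m ∧ k ≠ l ∧ k ≠ m ∧ l ≠ m then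
            (zz x j k j k) ^ 2 - (zz x j k l m) ^ 2 else 0)
          = ((zz x j k j k) ^ 2 - (zz x j k l m) ^ 2)
            - (if m = j then (zz x j k j k) ^ 2 - (zz x j k l j) ^ 2 else 0)
            - (if m = k then (zz x j k j k) ^ 2 - (zz x j k l k) ^ 2 else 0)
            - (if m = l then (zz x j k j k) ^ 2 - (zz x j k l l) ^ 2 else 0) := by
        intro m
        by_cases hmj : m = j
        · subst hmj
          simp [hjk, Ne.symm hlj, hlj, hlk]
        · by_cases hmk : m = k
          · subst hmk
            simp [hjk, hmj, Ne.symm hlk]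
          · by_cases hml : m = l
            · subst hml
              simp [hmj, hmk]
            · have g : j ≠ k ∧ j ≠ l ∧ j ≠ m ∧ k ≠ l ∧ k ≠ m ∧ l ≠ m :=
                ⟨hjk, Ne.symm hlj, Ne.symm hmj, Ne.symm hlk, Ne.symm hmk, Ne.symm hml⟩
              rw [if_pos g, if_neg hmj, if_neg hmk, if_neg hml]
              ring
      rw [Finset.sum_congr rfl fun m _ => key m]
      rw [Finset.sum_sub_distrib, Finset.sum_sub_distrib, Finset.sum_sub_distrib,
        Finset.sum_sub_distrib, sum_const_fin, Finset.sum_ite_eq', Finset.sum_ite_eq',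
        Finset.sum_ite_eq']
      simp only [Finset.mem_univ, if_true, zz_rr]
      ring
    have key2 : ∀ l, (∑ m, if j ≠ k ∧ j ≠ l ∧ j ≠ m ∧ k ≠ l ∧ k ≠ m ∧ l ≠ m then
          (zz x j k j k) ^ 2 - (zz x j k l m) ^ 2 else 0)
        = (((n : ℂ) - 3) * (zz x j k j k) ^ 2 - (∑ m, (zz x j k l m) ^ 2)
            + (zz x j k l j) ^ 2 + (zz x j k l k) ^ 2)
          - (if l = j then ((n : ℂ) - 3) * (zz x j k j k) ^ 2 - (∑ m, (zz x j k j m) ^ 2)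
              + (zz x j k j j) ^ 2 + (zz x j k j k) ^ 2 else 0)
          - (if l = k then ((n : ℂ) - 3) * (zz x j k j k) ^ 2 - (∑ m, (zz x j k k m) ^ 2)
              + (zz x j k k j) ^ 2 + (zz x j k k k) ^ 2 else 0) := by
      intro l
      by_cases hlj : l = j
      · subst hlj
        rw [if_pos rfl, if_neg hjk]
        simp [hjk]
      · by_cases hlk : l = k
        · subst hlk
          rw [if_neg hlj, if_pos rfl]
          simp [hjk, Ne.symm hjk]
        · rw [stage1 l hlj hlk, if_neg hlj, if_neg hlk]
          ring
    rw [Finset.sum_congr rfl fun l _ => key2 l]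
    rw [Finset.sum_sub_distrib, Finset.sum_sub_distrib, Finset.sum_ite_eq', Finset.sum_ite_eq']
    rw [Finset.sum_add_distrib, Finset.sum_add_distrib, Finset.sum_sub_distrib, sum_const_fin]
    simp only [Finset.mem_univ, if_true, zz_rr, zz_sq_swap_rs]
    ring

lemma symm1 (x : Fin n → Fin n → ℂ) :
    ∑ j, ∑ k, ∑ m, (zz x j k j m) ^ 2 = ∑ j, ∑ k, ∑ l, (zz x j k l k) ^ 2 :=
  calc ∑ j, ∑ k, ∑ m, (zz x j k j m) ^ 2
      = ∑ j, ∑ k, ∑ m, (zz x k j m j) ^ 2 := by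
        refine Finset.sum_congr rfl fun j _ => Finset.sum_congr rfl fun k _ =>
          Finset.sum_congr rfl fun m _ => ?_
        rw [zz_sq_swap_jk, zz_sq_swap_rs]
    _ = ∑ k, ∑ j, ∑ m, (zz x k j m j) ^ 2 := Finset.sum_comm

lemma symm2 (x : Fin n → Fin n → ℂ) :
    ∑ j, ∑ k, ∑ m, (zz x j k k m) ^ 2 = ∑ j, ∑ k, ∑ l, (zz x j k l k) ^ 2 := by
  refine Finset.sum_congr rfl fun j _ => Finset.sum_congr rfl fun k _ =>
    Finset.sum_congr rfl fun m _ => ?_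
  rw [zz_sq_swap_rs]

lemma symm3 (x : Fin n → Fin n → ℂ) :
    ∑ j, ∑ k, ∑ l, (zz x j k l j) ^ 2 = ∑ j, ∑ k, ∑ l, (zz x j k l k) ^ 2 :=
  calc ∑ j, ∑ k, ∑ l, (zz x j k l j) ^ 2
      = ∑ j, ∑ k, ∑ l, (zz x k j l j) ^ 2 := by
        refine Finset.sum_congr rfl fun j _ => Finset.sum_congr rfl fun k _ =>
          Finset.sum_congr rfl fun l _ => ?_
        rw [zz_sq_swap_jk]
    _ = ∑ k, ∑ j, ∑ l, (zz x k j l j) ^ 2 := Finset.sum_comm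

lemma lemA (x : Fin n → Fin n → ℂ) :
    (n : ℂ) * ((n : ℂ) - 1) * (∑ j, ∑ k, (zz x j k j k) ^ 2)
      - 4 * (∑ j, ∑ k, ∑ l, if j ≠ k ∧ j ≠ l ∧ k ≠ l then
          (zz x j k j k) ^ 2 - (zz x j k l k) ^ 2 else 0)
      - (∑ j, ∑ k, ∑ l, ∑ m, if j ≠ k ∧ j ≠ l ∧ j ≠ m ∧ k ≠ l ∧ k ≠ m ∧ l ≠ m then
          (zz x j k j k) ^ 2 - (zz x j k l m) ^ 2 else 0)
      = ∑ j, ∑ k, ∑ r, ∑ s, (zz x j k r s) ^ 2 := by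
  have hC : (∑ j, ∑ k, ∑ l, if j ≠ k ∧ j ≠ l ∧ k ≠ l then
        (zz x j k j k) ^ 2 - (zz x j k l k) ^ 2 else 0)
      = ((n : ℂ) - 1) * (∑ j, ∑ k, (zz x j k j k) ^ 2)
        - ∑ j, ∑ k, ∑ l, (zz x j k l k) ^ 2 := by
    rw [Finset.sum_congr rfl fun j _ => Finset.sum_congr rfl fun k _ => lemC_inner x j k]
    simp only [Finset.sum_sub_distrib, ← Finset.mul_sum]
  have hD : (∑ j, ∑ k, ∑ l, ∑ m, if j ≠ k ∧ j ≠ l ∧ j ≠ m ∧ k ≠ l ∧ k ≠ m ∧ l ≠ m then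
        (zz x j k j k) ^ 2 - (zz x j k l m) ^ 2 else 0)
      = ((n : ℂ) - 1) * ((n : ℂ) - 4) * (∑ j, ∑ k, (zz x j k j k) ^ 2)
        - (∑ j, ∑ k, ∑ l, ∑ m, (zz x j k l m) ^ 2)
        + 4 * (∑ j, ∑ k, ∑ l, (zz x j k l k) ^ 2) := by
    rw [Finset.sum_congr rfl fun j _ => Finset.sum_congr rfl fun k _ => lemD_inner x j k]
    simp only [Finset.sum_add_distrib, Finset.sum_sub_distrib, ← Finset.mul_sum]
    rw [symm1, symm2, symm3]
    ring
  rw [hC, hD]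
  ring

lemma sum_comm3 {ι₁ ι₂ ι₃ : Type*} [Fintype ι₁] [Fintype ι₂] [Fintype ι₃]
    (F : ι₁ → ι₂ → ι₃ → ℂ) :
    ∑ i, ∑ j, ∑ k, F i j k = ∑ k, ∑ i, ∑ j, F i j k :=
  calc ∑ i, ∑ j, ∑ k, F i j k
      = ∑ i, ∑ k, ∑ j, F i j k := Finset.sum_congr rfl fun i _ => Finset.sum_comm
    _ = ∑ k, ∑ i, ∑ j, F i j k := Finset.sum_comm

lemma sum_comm4 {ι₁ ι₂ ι₃ ι₄ : Type*} [Fintype ι₁] [Fintype ι₂] [Fintype ι₃] [Fintype ι₄]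
    (F : ι₁ → ι₂ → ι₃ → ι₄ → ℂ) :
    ∑ i, ∑ j, ∑ k, ∑ l, F i j k l = ∑ l, ∑ i, ∑ j, ∑ k, F i j k l :=
  calc ∑ i, ∑ j, ∑ k, ∑ l, F i j k l
      = ∑ i, ∑ l, ∑ j, ∑ k, F i j k l :=
        Finset.sum_congr rfl fun i _ => sum_comm3 _
    _ = ∑ l, ∑ i, ∑ j, ∑ k, F i j k l := Finset.sum_comm

lemma sum_comm5 {ι₁ ι₂ ι₃ ι₄ ι₅ : Type*} [Fintype ι₁] [Fintype ι₂] [Fintype ι₃] [Fintype ι₄]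
    [Fintype ι₅] (F : ι₁ → ι₂ → ι₃ → ι₄ → ι₅ → ℂ) :
    ∑ i, ∑ j, ∑ k, ∑ l, ∑ m, F i j k l m = ∑ m, ∑ i, ∑ j, ∑ k, ∑ l, F i j k l m :=
  calc ∑ i, ∑ j, ∑ k, ∑ l, ∑ m, F i j k l m
      = ∑ i, ∑ m, ∑ j, ∑ k, ∑ l, F i j k l m :=
        Finset.sum_congr rfl fun i _ => sum_comm4 _
    _ = ∑ m, ∑ i, ∑ j, ∑ k, ∑ l, F i j k l m := Finset.sum_comm

section Perm

variable (y : Fin n → Fin n → ℂ) (c : Equiv.Perm (Fin n) → ℂ)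

lemma c_swap (hc : ∀ π, c π = ∑ j, y j (π j)) {j k : Fin n} (hjk : j ≠ k) (π : Equiv.Perm (Fin n)) :
    c (π * Equiv.swap j k)
      = c π - (y j (π j) - y k (π j) - y j (π k) + y k (π k)) := by
  have h1 : c (π * Equiv.swap j k) - c π
      = ∑ i, (y i (π (Equiv.swap j k i)) - y i (π i)) := by
    rw [hc, hc, ← Finset.sum_sub_distrib]
    exact Finset.sum_congr rfl fun i _ => by rw [Equiv.Perm.mul_apply]
  have h2 : (∑ i ∈ ({j, k} : Finset (Fin n)), (y i (π (Equiv.swap j k i)) - y i (π i)))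
      = ∑ i, (y i (π (Equiv.swap j k i)) - y i (π i)) := by
    refine Finset.sum_subset (Finset.subset_univ _) fun i _ hi => ?_
    simp only [Finset.mem_insert, Finset.mem_singleton, not_or] at hi
    rw [Equiv.swap_apply_of_ne_of_ne hi.1 hi.2, sub_self]
  rw [Finset.sum_pair hjk] at h2
  rw [Equiv.swap_apply_left, Equiv.swap_apply_right] at h2
  have := h1.trans h2.symm
  linear_combination this

lemma perm_swap_fst (j k : Fin n) (π : Equiv.Perm (Fin n)) :
    (π * Equiv.swap j k) j = π k := by
  rw [Equiv.Perm.mul_apply, Equiv.swap_apply_left]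

lemma perm_swap_snd (j k : Fin n) (π : Equiv.Perm (Fin n)) :
    (π * Equiv.swap j k) k = π j := by
  rw [Equiv.Perm.mul_apply, Equiv.swap_apply_right]

lemma perm_swap_other {j k i : Fin n} (hij : i ≠ j) (hik : i ≠ k) (π : Equiv.Perm (Fin n)) :
    (π * Equiv.swap j k) i = π i := by
  rw [Equiv.Perm.mul_apply, Equiv.swap_apply_of_ne_of_ne hij hik]

end Perm

section Pair

variable (y : Fin n → Fin n → ℂ) (z : Fin n → Fin n → Fin n → Fin n → ℂ)
  (c : Equiv.Perm (Fin n) → ℂ)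

lemma pair1 (hz : ∀ j k r s, z j k r s = y j r - y k r - y j s + y k s)
    (hc : ∀ π, c π = ∑ j, y j (π j)) (u : ℝ) {j k : Fin n} (hjk : j ≠ k) :
    ∑ π : Equiv.Perm (Fin n), z j k (π j) (π k) *
        Complex.exp (-(↑u * z j k (π j) (π k))) * Complex.exp (↑u * c π)
      = - ∑ π : Equiv.Perm (Fin n), z j k (π j) (π k) * Complex.exp (↑u * c π) := by
  have reindex := Equiv.sum_comp (Equiv.mulRight (Equiv.swap j k))
    (fun π => z j k (π j) (π k) * Complex.exp (↑u * c π))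
  simp only [Equiv.coe_mulRight] at reindex
  rw [← reindex, ← Finset.sum_neg_distrib]
  refine Finset.sum_congr rfl fun π _ => ?_
  rw [perm_swap_fst, perm_swap_snd, c_swap y c hc hjk π]
  simp only [hz]
  rw [show (y j (π j) - y k (π j) - y j (π k) + y k (π k)) *
        Complex.exp (-(↑u * (y j (π j) - y k (π j) - y j (π k) + y k (π k)))) *
        Complex.exp (↑u * c π)
      = (y j (π j) - y k (π j) - y j (π k) + y k (π k)) *
        Complex.exp (-(↑u * (y j (π j) - y k (π j) - y j (π k) + y k (π k))) + ↑u * c π)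
      from by rw [Complex.exp_add]; ring]
  rw [show (↑u * (c π - (y j (π j) - y k (π j) - y j (π k) + y k (π k))))
      = -(↑u * (y j (π j) - y k (π j) - y j (π k) + y k (π k))) + ↑u * c π from by ring]
  ring

lemma pair2 (hz : ∀ j k r s, z j k r s = y j r - y k r - y j s + y k s)
    (hc : ∀ π, c π = ∑ j, y j (π j)) (u : ℝ) {j k l : Fin n}
    (hjl : j ≠ l) (hkj : k ≠ j) (hkl : k ≠ l) :
    ∑ π : Equiv.Perm (Fin n), (z j k (π j) (π k)) ^ 2 *
        Complex.exp (↑u * z j l (π l) (π j)) * Complex.exp (↑u * c π)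
      = ∑ π : Equiv.Perm (Fin n), (z j k (π l) (π k)) ^ 2 * Complex.exp (↑u * c π) := by
  have reindex := Equiv.sum_comp (Equiv.mulRight (Equiv.swap j l))
    (fun π => (z j k (π l) (π k)) ^ 2 * Complex.exp (↑u * c π))
  simp only [Equiv.coe_mulRight] at reindex
  rw [← reindex]
  refine Finset.sum_congr rfl fun π _ => ?_
  rw [perm_swap_snd, perm_swap_other hkj hkl, c_swap y c hc hjl π]
  simp only [hz]
  rw [mul_assoc, ← Complex.exp_add]
  congr 1
  congr 1
  ring

lemma pair3 (hz : ∀ j k r s, z j k r s = y j r - y k r - y j s + y k s)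
    (hc : ∀ π, c π = ∑ j, y j (π j)) (u : ℝ) {j k l m : Fin n}
    (hjk : j ≠ k) (hjl : j ≠ l) (hjm : j ≠ m) (hkl : k ≠ l) (hkm : k ≠ m) (hlm : l ≠ m) :
    ∑ π : Equiv.Perm (Fin n), (z j k (π j) (π k)) ^ 2 *
        Complex.exp (↑u * z j l (π l) (π j) + ↑u * z k m (π m) (π k)) *
        Complex.exp (↑u * c π)
      = ∑ π : Equiv.Perm (Fin n), (z j k (π l) (π m)) ^ 2 * Complex.exp (↑u * c π) := by
  have reindex := Equiv.sum_comp (Equiv.mulRight (Equiv.swap j l * Equiv.swap k m))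
    (fun π => (z j k (π l) (π m)) ^ 2 * Complex.exp (↑u * c π))
  simp only [Equiv.coe_mulRight] at reindex
  rw [← reindex]
  refine Finset.sum_congr rfl fun π _ => ?_
  have hassoc : π * (Equiv.swap j l * Equiv.swap k m) = π * Equiv.swap j l * Equiv.swap k m :=
    (mul_assoc _ _ _).symm
  rw [hassoc]
  have e1 : (π * Equiv.swap j l * Equiv.swap k m) l = π j := by
    rw [perm_swap_other (Ne.symm hkl) hlm, perm_swap_snd]
  have e2 : (π * Equiv.swap j l * Equiv.swap k m) m = π k := by
    rw [perm_swap_snd, perm_swap_other (Ne.symm hjk) hkl]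
  have ec : c (π * Equiv.swap j l * Equiv.swap k m)
      = c π - (y j (π j) - y l (π j) - y j (π l) + y l (π l))
          - (y k (π k) - y m (π k) - y k (π m) + y m (π m)) := by
    rw [c_swap y c hc hkm (π * Equiv.swap j l),
      perm_swap_other (Ne.symm hjk) hkl, perm_swap_other (Ne.symm hjm) (Ne.symm hlm),
      c_swap y c hc hjl π]
  rw [e1, e2, ec]
  simp only [hz]
  rw [mul_assoc, ← Complex.exp_add]
  congr 1
  congr 1
  ring

end Pair

section Ytil

variable (y ytil : Fin n → Fin n → ℂ)

lemma ytil_rowsum (hn : (n : ℂ) ≠ 0)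
    (hytil : ∀ j r, ytil j r =
      y j r - (∑ k, y k r) / n - (∑ s, y j s) / n + (∑ k, ∑ s, y k s) / (n : ℂ) ^ 2)
    (r : Fin n) : ∑ j, ytil j r = 0 := by
  rw [Finset.sum_congr rfl fun j _ => hytil j r]
  rw [Finset.sum_add_distrib, Finset.sum_sub_distrib, Finset.sum_sub_distrib,
    sum_const_fin, sum_const_fin, ← Finset.sum_div]
  field_simp
  ring

lemma ytil_colsum (hn : (n : ℂ) ≠ 0)
    (hytil : ∀ j r, ytil j r =
      y j r - (∑ k, y k r) / n - (∑ s, y j s) / n + (∑ k, ∑ s, y k s) / (n : ℂ) ^ 2)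
    (j : Fin n) : ∑ r, ytil j r = 0 := by
  rw [Finset.sum_congr rfl fun r _ => hytil j r]
  rw [Finset.sum_add_distrib, Finset.sum_sub_distrib, Finset.sum_sub_distrib,
    sum_const_fin, sum_const_fin, ← Finset.sum_div]
  rw [show ∑ r : Fin n, ∑ k, y k r = ∑ k, ∑ r, y k r from Finset.sum_comm]
  field_simp
  ring

lemma zz_ytil_eq
    (hytil : ∀ j r, ytil j r =
      y j r - (∑ k, y k r) / n - (∑ s, y j s) / n + (∑ k, ∑ s, y k s) / (n : ℂ) ^ 2)
    (j k r s : Fin n) : zz y j k r s = zz ytil j k r s := by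
  simp only [zz, hytil]
  ring

lemma lemB (hn : (n : ℂ) ≠ 0)
    (hytil : ∀ j r, ytil j r =
      y j r - (∑ k, y k r) / n - (∑ s, y j s) / n + (∑ k, ∑ s, y k s) / (n : ℂ) ^ 2) :
    ∑ j, ∑ k, ∑ r, ∑ s, (zz y j k r s) ^ 2
      = 4 * (n : ℂ) ^ 2 * ∑ j, ∑ r, (ytil j r) ^ 2 := by
  have h1 : ∑ j, ∑ k, ∑ r, ∑ s, (zz y j k r s) ^ 2
      = ∑ j, ∑ k, ∑ r, ∑ s, (zz ytil j k r s) ^ 2 := by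
    refine Finset.sum_congr rfl fun j _ => Finset.sum_congr rfl fun k _ =>
      Finset.sum_congr rfl fun r _ => Finset.sum_congr rfl fun s _ => ?_
    rw [zz_ytil_eq y ytil hytil]
  rw [h1, S_expand]
  rw [show ∑ r : Fin n, (∑ j, ytil j r) ^ 2 = 0 from by
    refine Finset.sum_eq_zero fun r _ => ?_
    rw [ytil_rowsum y ytil hn hytil r]; ring]
  rw [show ∑ j : Fin n, (∑ r, ytil j r) ^ 2 = 0 from by
    refine Finset.sum_eq_zero fun j _ => ?_
    rw [ytil_colsum y ytil hn hytil j]; ring]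
  rw [show ∑ j : Fin n, ∑ r, ytil j r = 0 from by
    refine Finset.sum_eq_zero fun j _ => ytil_colsum y ytil hn hytil j]
  ring

end Ytil

lemma sumz (y : Fin n → Fin n → ℂ) (z : Fin n → Fin n → Fin n → Fin n → ℂ)
    (c : Equiv.Perm (Fin n) → ℂ)
    (hz : ∀ j k r s, z j k r s = y j r - y k r - y j s + y k s)
    (hc : ∀ π, c π = ∑ j, y j (π j)) (π : Equiv.Perm (Fin n)) :
    ∑ j, ∑ k, z j k (π j) (π k) = 2 * n * c π - 2 * (∑ j, ∑ r, y j r) := by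
  have inner : ∀ j, ∑ k, z j k (π j) (π k)
      = (n : ℂ) * y j (π j) - (∑ k, y k (π j)) - (∑ s, y j s) + c π := by
    intro j
    rw [Finset.sum_congr rfl fun k _ => hz j k (π j) (π k)]
    rw [Finset.sum_add_distrib, Finset.sum_sub_distrib, Finset.sum_sub_distrib, sum_const_fin]
    rw [show ∑ k, y j (π k) = ∑ s, y j s from Equiv.sum_comp π (fun s => y j s)]
    rw [← hc]
  rw [Finset.sum_congr rfl fun j _ => inner j]
  rw [Finset.sum_add_distrib, Finset.sum_sub_distrib, Finset.sum_sub_distrib,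
    ← Finset.mul_sum, sum_const_fin, ← hc]
  rw [show ∑ j, ∑ k, y k (π j) = ∑ r, ∑ k, y k r from Equiv.sum_comp π (fun r => ∑ k, y k r)]
  rw [show ∑ r : Fin n, ∑ k, y k r = ∑ k, ∑ r, y k r from Finset.sum_comm]
  ring

lemma sum_mul_out2 {ι₁ ι₂ : Type*} [Fintype ι₁] [Fintype ι₂] (G : ι₁ → ι₂ → ℂ) (e : ℂ) :
    ∑ j, ∑ k, G j k * e = (∑ j, ∑ k, G j k) * e := by
  rw [Finset.sum_mul]
  exact Finset.sum_congr rfl fun j _ => (Finset.sum_mul _ _ _).symm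

lemma sum_mul_out3 {ι₁ ι₂ ι₃ : Type*} [Fintype ι₁] [Fintype ι₂] [Fintype ι₃]
    (G : ι₁ → ι₂ → ι₃ → ℂ) (e : ℂ) :
    ∑ j, ∑ k, ∑ l, G j k l * e = (∑ j, ∑ k, ∑ l, G j k l) * e := by
  rw [Finset.sum_mul]
  exact Finset.sum_congr rfl fun j _ => sum_mul_out2 _ _

lemma sum_mul_out4 {ι₁ ι₂ ι₃ ι₄ : Type*} [Fintype ι₁] [Fintype ι₂] [Fintype ι₃] [Fintype ι₄]
    (G : ι₁ → ι₂ → ι₃ → ι₄ → ℂ) (e : ℂ) :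
    ∑ j, ∑ k, ∑ l, ∑ m, G j k l m * e = (∑ j, ∑ k, ∑ l, ∑ m, G j k l m) * e := by
  rw [Finset.sum_mul]
  exact Finset.sum_congr rfl fun j _ => sum_mul_out3 _ _

lemma mul_sum2 {ι₁ ι₂ : Type*} [Fintype ι₁] [Fintype ι₂] (G : ι₁ → ι₂ → ℂ) (a : ℂ) :
    ∑ j, ∑ k, a * G j k = a * ∑ j, ∑ k, G j k := by
  rw [Finset.mul_sum]
  exact Finset.sum_congr rfl fun j _ => (Finset.mul_sum _ _ _).symm


lemma mul_sum3 {ι₁ ι₂ ι₃ : Type*} [Fintype ι₁] [Fintype ι₂] [Fintype ι₃]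
    (G : ι₁ → ι₂ → ι₃ → ℂ) (a : ℂ) :
    ∑ j, ∑ k, ∑ l, a * G j k l = a * ∑ j, ∑ k, ∑ l, G j k l := by
  rw [Finset.mul_sum]
  exact Finset.sum_congr rfl fun j _ => mul_sum2 _ _

lemma mul_sum4 {ι₁ ι₂ ι₃ ι₄ : Type*} [Fintype ι₁] [Fintype ι₂] [Fintype ι₃] [Fintype ι₄]
    (G : ι₁ → ι₂ → ι₃ → ι₄ → ℂ) (a : ℂ) :
    ∑ j, ∑ k, ∑ l, ∑ m, a * G j k l m = a * ∑ j, ∑ k, ∑ l, ∑ m, G j k l m := by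
  rw [Finset.mul_sum]
  exact Finset.sum_congr rfl fun j _ => mul_sum3 _ _

lemma bracket (hn0 : (n:ℂ) ≠ 0) (hn1 : (n:ℂ)-1 ≠ 0) (v X A C D E β : ℂ)
    (hh : (n:ℂ)*((n:ℂ)-1)*A - 4*C - D = 4*(n:ℂ)^2*((n:ℂ)-1)*β) :
    ((4*(n:ℂ)*X - v*A)*E)/(4*(n:ℂ)) + ((v*C)*E)/((n:ℂ)^2*((n:ℂ)-1))
        + ((v*D)*E)/(4*(n:ℂ)^2*((n:ℂ)-1))
      = (X - v*β)*E := by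
  have hd : (4*(n:ℂ)^2*((n:ℂ)-1)) ≠ 0 :=
    mul_ne_zero (mul_ne_zero (by norm_num) (pow_ne_zero _ hn0)) hn1
  have e1 : ((4*(n:ℂ)*X - v*A)*E)/(4*(n:ℂ))
      = ((n:ℂ)*((n:ℂ)-1)*((4*(n:ℂ)*X - v*A)*E))/(4*(n:ℂ)^2*((n:ℂ)-1)) := by
    rw [div_eq_div_iff (mul_ne_zero (by norm_num) hn0) hd]; ring
  have e2 : ((v*C)*E)/((n:ℂ)^2*((n:ℂ)-1)) = (4*((v*C)*E))/(4*(n:ℂ)^2*((n:ℂ)-1)) := by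
    rw [div_eq_div_iff (mul_ne_zero (pow_ne_zero _ hn0) hn1) hd]; ring
  rw [e1, e2, ← add_div, ← add_div, div_eq_iff hd]
  linear_combination (-(v*E))*hh

lemma div_combine (hn0 : (n:ℂ) ≠ 0) (hn1 : (n:ℂ)-1 ≠ 0) (A C D β : ℂ)
    (h : (n:ℂ)*((n:ℂ)-1)*A - 4*C - D = 4*(n:ℂ)^2*((n:ℂ)-1)*β) :
    A/(4*(n:ℂ)) - C/((n:ℂ)^2*((n:ℂ)-1)) - D/(4*(n:ℂ)^2*((n:ℂ)-1)) = β := by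
  have hd : (4*(n:ℂ)^2*((n:ℂ)-1)) ≠ 0 :=
    mul_ne_zero (mul_ne_zero (by norm_num) (pow_ne_zero _ hn0)) hn1
  have h1 : A/(4*(n:ℂ)) = ((n:ℂ)*((n:ℂ)-1)*A)/(4*(n:ℂ)^2*((n:ℂ)-1)) := by
    rw [div_eq_div_iff (mul_ne_zero (by norm_num) hn0) hd]; ring
  have h2 : C/((n:ℂ)^2*((n:ℂ)-1)) = (4*C)/(4*(n:ℂ)^2*((n:ℂ)-1)) := by
    rw [div_eq_div_iff (mul_ne_zero (pow_ne_zero _ hn0) hn1) hd]; ring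
  rw [h1, h2, div_sub_div_same, div_sub_div_same, h, mul_div_cancel_left₀ _ hd]

end S12

section MainThm
open S12

open S12

/-- Proposition 5: identity (16) for permanents of complex matrices. -/
theorem stmt_12
    (n : ℕ) (hn : 2 ≤ n) (y : Fin n → Fin n → ℂ)
    (z : Fin n → Fin n → Fin n → Fin n → ℂ)
    (hz : ∀ j k r s, z j k r s = y j r - y k r - y j s + y k s)
    (c : Equiv.Perm (Fin n) → ℂ)
    (hc : ∀ π, c π = ∑ j, y j (π j))
    (ytil : Fin n → Fin n → ℂ)
    (hytil : ∀ j r, ytil j r =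
      y j r - (∑ k, y k r) / n - (∑ s, y j s) / n + (∑ k, ∑ s, y k s) / (n : ℂ) ^ 2)
    (α β : ℂ)
    (hα : α = (∑ j, ∑ r, y j r) / n)
    (hβ : β = (∑ j, ∑ r, (ytil j r) ^ 2) / ((n : ℂ) - 1))
    (f₁ f₂ f₃ f : ℝ → ℂ)
    (hf₁ : ∀ u : ℝ, f₁ u = ∑ j, ∑ k, if j ≠ k then
      ∑ π : Equiv.Perm (Fin n), z j k (π j) (π k) *
        (1 - (u : ℂ) * z j k (π j) (π k) - Complex.exp (-((u : ℂ) * z j k (π j) (π k)))) *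
        Complex.exp ((u : ℂ) * c π) else 0)
    (hf₂ : ∀ u : ℝ, f₂ u = ∑ j, ∑ k, ∑ l, if j ≠ k ∧ j ≠ l ∧ k ≠ l then
      ∑ π : Equiv.Perm (Fin n), (u : ℂ) * (z j k (π j) (π k)) ^ 2 *
        (1 - Complex.exp ((u : ℂ) * z j l (π l) (π j))) *
        Complex.exp ((u : ℂ) * c π) else 0)
    (hf₃ : ∀ u : ℝ, f₃ u = ∑ j, ∑ k, ∑ l, ∑ m,
      if j ≠ k ∧ j ≠ l ∧ j ≠ m ∧ k ≠ l ∧ k ≠ m ∧ l ≠ m then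
      ∑ π : Equiv.Perm (Fin n), (u : ℂ) * (z j k (π j) (π k)) ^ 2 *
        (1 - Complex.exp ((u : ℂ) * z j l (π l) (π j) + (u : ℂ) * z k m (π m) (π k))) *
        Complex.exp ((u : ℂ) * c π) else 0)
    (hf : ∀ u : ℝ, f u = f₁ u / (4 * n) + f₂ u / ((n : ℂ) ^ 2 * ((n : ℂ) - 1)) +
      f₃ u / (4 * (n : ℂ) ^ 2 * ((n : ℂ) - 1))) :
    (∑ π : Equiv.Perm (Fin n), Complex.exp (c π)) / (n.factorial : ℂ) -
        Complex.exp (α + β / 2) =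
      (∫ u in (0:ℝ)..1, f u *
        Complex.exp ((1 - (u : ℂ)) * α + (1 - (u : ℂ) ^ 2) * β / 2)) /
        (n.factorial : ℂ) := by
  have hn0 : (n : ℂ) ≠ 0 := by
    simp only [ne_eq, Nat.cast_eq_zero]
    omega
  have hn1 : (n : ℂ) - 1 ≠ 0 := by
    rw [sub_ne_zero]
    intro h
    have : n = 1 := by exact_mod_cast h
    omega
  have ht : ∑ j, ∑ r, y j r = (n : ℂ) * α := by
    rw [hα, mul_div_cancel₀ _ hn0]
  -- the per-permutation pointwise identity, in multiplied form
  have K4m : ∀ π : Equiv.Perm (Fin n),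
      (n : ℂ) * ((n : ℂ) - 1) * (∑ j, ∑ k, (z j k (π j) (π k)) ^ 2)
        - 4 * (∑ j, ∑ k, ∑ l, if j ≠ k ∧ j ≠ l ∧ k ≠ l then
            (z j k (π j) (π k)) ^ 2 - (z j k (π l) (π k)) ^ 2 else 0)
        - (∑ j, ∑ k, ∑ l, ∑ m, if j ≠ k ∧ j ≠ l ∧ j ≠ m ∧ k ≠ l ∧ k ≠ m ∧ l ≠ m then
            (z j k (π j) (π k)) ^ 2 - (z j k (π l) (π m)) ^ 2 else 0)
        = 4 * (n : ℂ) ^ 2 * ((n : ℂ) - 1) * β := by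
    intro π
    set x : Fin n → Fin n → ℂ := fun j r => y j (π r) with hxdef
    have hx : ∀ j k a b, z j k (π a) (π b) = zz x j k a b := by
      intro j k a b
      rw [hz]
      simp [zz, hxdef]
    have hS : ∑ j, ∑ k, ∑ r, ∑ s, (zz x j k r s) ^ 2
        = ∑ j, ∑ k, ∑ r, ∑ s, (zz y j k r s) ^ 2 := by
      refine Finset.sum_congr rfl fun j _ => Finset.sum_congr rfl fun k _ => ?_
      calc ∑ r, ∑ s, (zz x j k r s) ^ 2
          = ∑ r, ∑ s, (zz y j k (π r) (π s)) ^ 2 := by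
            refine Finset.sum_congr rfl fun r _ => Finset.sum_congr rfl fun s _ => ?_
            simp [zz, hxdef]
        _ = ∑ r, ∑ s, (zz y j k (π r) s) ^ 2 := by
            refine Finset.sum_congr rfl fun r _ => ?_
            exact Equiv.sum_comp π (fun s => (zz y j k (π r) s) ^ 2)
        _ = ∑ r, ∑ s, (zz y j k r s) ^ 2 :=
            Equiv.sum_comp π (fun r => ∑ s, (zz y j k r s) ^ 2)
    have hβ4 : ∑ j, ∑ k, ∑ r, ∑ s, (zz y j k r s) ^ 2
        = 4 * (n : ℂ) ^ 2 * ((n : ℂ) - 1) * β := by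
      rw [lemB y ytil hn0 hytil, hβ]
      field_simp
    have hA := lemA x
    rw [hS, hβ4] at hA
    simp only [← hx] at hA
    exact hA
  have KEY : ∀ u : ℝ, f u = ∑ π : Equiv.Perm (Fin n),
      (c π - α - (u : ℂ) * β) * Complex.exp ((u : ℂ) * c π) := by
    intro u
    have hF1 : f₁ u = ∑ π : Equiv.Perm (Fin n),
        (4 * (n : ℂ) * (c π - α) - (u : ℂ) * ∑ j, ∑ k, (z j k (π j) (π k)) ^ 2) *
          Complex.exp ((u : ℂ) * c π) := by
      rw [hf₁ u]
      have step : ∀ j k : Fin n, (if j ≠ k then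
          ∑ π : Equiv.Perm (Fin n), z j k (π j) (π k) *
            (1 - (u : ℂ) * z j k (π j) (π k) - Complex.exp (-((u : ℂ) * z j k (π j) (π k)))) *
            Complex.exp ((u : ℂ) * c π) else 0)
          = ∑ π : Equiv.Perm (Fin n),
              (2 * z j k (π j) (π k) - (u : ℂ) * (z j k (π j) (π k)) ^ 2) *
                Complex.exp ((u : ℂ) * c π) := by
        intro j k
        by_cases hjk : j = k
        · subst hjk
          rw [if_neg (by simp)]
          refine (Finset.sum_eq_zero fun π _ => ?_).symm
          have hzz : z j j (π j) (π j) = 0 := by rw [hz]; ring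
          rw [hzz]; ring
        · rw [if_pos hjk]
          have exp1 : ∀ π : Equiv.Perm (Fin n), z j k (π j) (π k) *
              (1 - (u : ℂ) * z j k (π j) (π k) - Complex.exp (-((u : ℂ) * z j k (π j) (π k)))) *
              Complex.exp ((u : ℂ) * c π)
              = ((2 * z j k (π j) (π k) - (u : ℂ) * (z j k (π j) (π k)) ^ 2) *
                  Complex.exp ((u : ℂ) * c π))
                - (z j k (π j) (π k) * Complex.exp (-((u : ℂ) * z j k (π j) (π k))) *
                    Complex.exp ((u : ℂ) * c π)
                  + z j k (π j) (π k) * Complex.exp ((u : ℂ) * c π)) := fun π => by ring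
          rw [Finset.sum_congr rfl fun π _ => exp1 π, Finset.sum_sub_distrib,
            Finset.sum_add_distrib, pair1 y z c hz hc u hjk]
          ring
      rw [Finset.sum_congr rfl fun j _ => Finset.sum_congr rfl fun k _ => step j k]
      rw [sum_comm3]
      refine Finset.sum_congr rfl fun π _ => ?_
      rw [sum_mul_out2]
      congr 1
      rw [Finset.sum_congr rfl fun j _ => Finset.sum_sub_distrib _ _, Finset.sum_sub_distrib]
      rw [show (∑ j, ∑ k, 2 * z j k (π j) (π k)) = 2 * ∑ j, ∑ k, z j k (π j) (π k) from
        mul_sum2 _ 2]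
      rw [show (∑ j, ∑ k, (u : ℂ) * (z j k (π j) (π k)) ^ 2)
          = (u : ℂ) * ∑ j, ∑ k, (z j k (π j) (π k)) ^ 2 from mul_sum2 _ _]
      rw [sumz y z c hz hc π, ht]
      ring
    have hF2 : f₂ u = ∑ π : Equiv.Perm (Fin n),
        ((u : ℂ) * ∑ j, ∑ k, ∑ l, if j ≠ k ∧ j ≠ l ∧ k ≠ l then
          (z j k (π j) (π k)) ^ 2 - (z j k (π l) (π k)) ^ 2 else 0) *
          Complex.exp ((u : ℂ) * c π) := by
      rw [hf₂ u]
      have step : ∀ j k l : Fin n, (if j ≠ k ∧ j ≠ l ∧ k ≠ l then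
          ∑ π : Equiv.Perm (Fin n), (u : ℂ) * (z j k (π j) (π k)) ^ 2 *
            (1 - Complex.exp ((u : ℂ) * z j l (π l) (π j))) * Complex.exp ((u : ℂ) * c π)
          else 0)
          = ∑ π : Equiv.Perm (Fin n),
              (u : ℂ) * (if j ≠ k ∧ j ≠ l ∧ k ≠ l then
                (z j k (π j) (π k)) ^ 2 - (z j k (π l) (π k)) ^ 2 else 0) *
                Complex.exp ((u : ℂ) * c π) := by
        intro j k l
        by_cases hcond : j ≠ k ∧ j ≠ l ∧ k ≠ l
        · rw [if_pos hcond]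
          have exp1 : ∀ π : Equiv.Perm (Fin n), (u : ℂ) * (z j k (π j) (π k)) ^ 2 *
              (1 - Complex.exp ((u : ℂ) * z j l (π l) (π j))) * Complex.exp ((u : ℂ) * c π)
              = (u : ℂ) * ((z j k (π j) (π k)) ^ 2 * Complex.exp ((u : ℂ) * c π))
                - (u : ℂ) * ((z j k (π j) (π k)) ^ 2 *
                    Complex.exp ((u : ℂ) * z j l (π l) (π j)) *
                    Complex.exp ((u : ℂ) * c π)) := fun π => by ring
          rw [Finset.sum_congr rfl fun π _ => exp1 π, Finset.sum_sub_distrib,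
            ← Finset.mul_sum, ← Finset.mul_sum,
            pair2 y z c hz hc u hcond.2.1 (Ne.symm hcond.1) hcond.2.2]
          have exp2 : ∀ π : Equiv.Perm (Fin n),
              (u : ℂ) * (if j ≠ k ∧ j ≠ l ∧ k ≠ l then
                (z j k (π j) (π k)) ^ 2 - (z j k (π l) (π k)) ^ 2 else 0) *
                Complex.exp ((u : ℂ) * c π)
              = (u : ℂ) * ((z j k (π j) (π k)) ^ 2 * Complex.exp ((u : ℂ) * c π))
                - (u : ℂ) * ((z j k (π l) (π k)) ^ 2 * Complex.exp ((u : ℂ) * c π)) := by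
            intro π
            rw [if_pos hcond]
            ring
          rw [Finset.sum_congr rfl fun π _ => exp2 π, Finset.sum_sub_distrib,
            ← Finset.mul_sum, ← Finset.mul_sum]
        · rw [if_neg hcond]
          refine (Finset.sum_eq_zero fun π _ => ?_).symm
          rw [if_neg hcond]
          ring
      rw [Finset.sum_congr rfl fun j _ => Finset.sum_congr rfl fun k _ =>
        Finset.sum_congr rfl fun l _ => step j k l]
      rw [sum_comm4]
      refine Finset.sum_congr rfl fun π _ => ?_
      rw [sum_mul_out3]
      congr 1
      exact mul_sum3 _ _
    have hF3 : f₃ u = ∑ π : Equiv.Perm (Fin n),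
        ((u : ℂ) * ∑ j, ∑ k, ∑ l, ∑ m,
          if j ≠ k ∧ j ≠ l ∧ j ≠ m ∧ k ≠ l ∧ k ≠ m ∧ l ≠ m then
            (z j k (π j) (π k)) ^ 2 - (z j k (π l) (π m)) ^ 2 else 0) *
          Complex.exp ((u : ℂ) * c π) := by
      rw [hf₃ u]
      have step : ∀ j k l m : Fin n,
          (if j ≠ k ∧ j ≠ l ∧ j ≠ m ∧ k ≠ l ∧ k ≠ m ∧ l ≠ m then
            ∑ π : Equiv.Perm (Fin n), (u : ℂ) * (z j k (π j) (π k)) ^ 2 *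
              (1 - Complex.exp ((u : ℂ) * z j l (π l) (π j) + (u : ℂ) * z k m (π m) (π k))) *
              Complex.exp ((u : ℂ) * c π) else 0)
          = ∑ π : Equiv.Perm (Fin n),
              (u : ℂ) * (if j ≠ k ∧ j ≠ l ∧ j ≠ m ∧ k ≠ l ∧ k ≠ m ∧ l ≠ m then
                (z j k (π j) (π k)) ^ 2 - (z j k (π l) (π m)) ^ 2 else 0) *
                Complex.exp ((u : ℂ) * c π) := by
        intro j k l m
        by_cases hcond : j ≠ k ∧ j ≠ l ∧ j ≠ m ∧ k ≠ l ∧ k ≠ m ∧ l ≠ m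
        · rw [if_pos hcond]
          obtain ⟨h1, h2, h3, h4, h5, h6⟩ := hcond
          have exp1 : ∀ π : Equiv.Perm (Fin n), (u : ℂ) * (z j k (π j) (π k)) ^ 2 *
              (1 - Complex.exp ((u : ℂ) * z j l (π l) (π j) + (u : ℂ) * z k m (π m) (π k))) *
              Complex.exp ((u : ℂ) * c π)
              = (u : ℂ) * ((z j k (π j) (π k)) ^ 2 * Complex.exp ((u : ℂ) * c π))
                - (u : ℂ) * ((z j k (π j) (π k)) ^ 2 *
                    Complex.exp ((u : ℂ) * z j l (π l) (π j) + (u : ℂ) * z k m (π m) (π k)) *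
                    Complex.exp ((u : ℂ) * c π)) := fun π => by ring
          rw [Finset.sum_congr rfl fun π _ => exp1 π, Finset.sum_sub_distrib,
            ← Finset.mul_sum, ← Finset.mul_sum,
            pair3 y z c hz hc u h1 h2 h3 h4 h5 h6]
          have exp2 : ∀ π : Equiv.Perm (Fin n),
              (u : ℂ) * (if j ≠ k ∧ j ≠ l ∧ j ≠ m ∧ k ≠ l ∧ k ≠ m ∧ l ≠ m then
                (z j k (π j) (π k)) ^ 2 - (z j k (π l) (π m)) ^ 2 else 0) *
                Complex.exp ((u : ℂ) * c π)
              = (u : ℂ) * ((z j k (π j) (π k)) ^ 2 * Complex.exp ((u : ℂ) * c π))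
                - (u : ℂ) * ((z j k (π l) (π m)) ^ 2 * Complex.exp ((u : ℂ) * c π)) := by
            intro π
            rw [if_pos ⟨h1, h2, h3, h4, h5, h6⟩]
            ring
          rw [Finset.sum_congr rfl fun π _ => exp2 π, Finset.sum_sub_distrib,
            ← Finset.mul_sum, ← Finset.mul_sum]
        · rw [if_neg hcond]
          refine (Finset.sum_eq_zero fun π _ => ?_).symm
          rw [if_neg hcond]
          ring
      rw [Finset.sum_congr rfl fun j _ => Finset.sum_congr rfl fun k _ =>
        Finset.sum_congr rfl fun l _ => Finset.sum_congr rfl fun m _ => step j k l m]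
      rw [sum_comm5]
      refine Finset.sum_congr rfl fun π _ => ?_
      rw [sum_mul_out4]
      congr 1
      exact mul_sum4 _ _
    rw [hf u, hF1, hF2, hF3, Finset.sum_div, Finset.sum_div, Finset.sum_div,
      ← Finset.sum_add_distrib, ← Finset.sum_add_distrib]
    refine Finset.sum_congr rfl fun π _ => ?_
    exact bracket hn0 hn1 (u : ℂ) (c π - α) _ _ _ _ β (K4m π)
  have hderiv : ∀ t : ℝ, HasDerivAt (fun u : ℝ =>
      (∑ π : Equiv.Perm (Fin n), Complex.exp ((u : ℂ) * c π)) *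
        Complex.exp ((1 - (u : ℂ)) * α + (1 - (u : ℂ) ^ 2) * β / 2))
      (f t * Complex.exp ((1 - (t : ℂ)) * α + (1 - (t : ℂ) ^ 2) * β / 2)) t := by
    intro u
    have h1 : HasDerivAt (fun v : ℝ => ∑ π : Equiv.Perm (Fin n), Complex.exp ((v : ℂ) * c π))
        (∑ π : Equiv.Perm (Fin n), c π * Complex.exp ((u : ℂ) * c π)) u := by
      refine HasDerivAt.fun_sum fun π _ => ?_
      have hmul : HasDerivAt (fun v : ℂ => v * c π) (c π) ((u : ℝ) : ℂ) := by
        simpa using (hasDerivAt_id ((u : ℝ) : ℂ)).mul_const (c π)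
      have h2 := hmul.cexp.comp_ofReal
      simpa [mul_comm] using h2
    have h2 : HasDerivAt (fun v : ℝ =>
        Complex.exp ((1 - (v : ℂ)) * α + (1 - (v : ℂ) ^ 2) * β / 2))
        (Complex.exp ((1 - (u : ℂ)) * α + (1 - (u : ℂ) ^ 2) * β / 2) * (-α - (u : ℂ) * β))
        u := by
      have ha : HasDerivAt (fun v : ℂ => (1 - v) * α + (1 - v ^ 2) * β / 2)
          (-α - (u : ℂ) * β) ((u : ℝ) : ℂ) := by
        have h3 : HasDerivAt (fun v : ℂ => (1 - v) * α) (-α) ((u : ℝ) : ℂ) := by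
          simpa using ((hasDerivAt_id ((u : ℝ) : ℂ)).const_sub 1).mul_const α
        have h4 : HasDerivAt (fun v : ℂ => (1 - v ^ 2) * β / 2) (-((u : ℂ) * β))
            ((u : ℝ) : ℂ) := by
          have h5 := ((hasDerivAt_pow 2 ((u : ℝ) : ℂ)).const_sub 1).mul_const (β / 2)
          have h7 : HasDerivAt (fun v : ℂ => (1 - v ^ 2) * (β / 2)) (-((u : ℂ) * β))
              ((u : ℝ) : ℂ) := by
            refine h5.congr_deriv ?_
            ring
          simpa [mul_div_assoc] using h7
        exact (h3.fun_add h4).congr_deriv (by ring)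
      exact ha.cexp.comp_ofReal
    have hprod := h1.fun_mul h2
    refine hprod.congr_deriv ?_
    rw [KEY u]
    have split : ∑ π : Equiv.Perm (Fin n), (c π - α - (u : ℂ) * β) * Complex.exp ((u : ℂ) * c π)
        = (∑ π : Equiv.Perm (Fin n), c π * Complex.exp ((u : ℂ) * c π))
          + (∑ π : Equiv.Perm (Fin n), Complex.exp ((u : ℂ) * c π)) * (-α - (u : ℂ) * β) := by
      rw [Finset.sum_mul, ← Finset.sum_add_distrib]
      refine Finset.sum_congr rfl fun π _ => ?_
      ring
    rw [split]
    ring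
  have hint : IntervalIntegrable (fun u : ℝ => f u *
      Complex.exp ((1 - (u : ℂ)) * α + (1 - (u : ℂ) ^ 2) * β / 2))
      MeasureTheory.volume 0 1 := by
    have heq : (fun u : ℝ => f u * Complex.exp ((1 - (u : ℂ)) * α + (1 - (u : ℂ) ^ 2) * β / 2))
        = fun u : ℝ => (∑ π : Equiv.Perm (Fin n), (c π - α - (u : ℂ) * β) *
            Complex.exp ((u : ℂ) * c π)) *
            Complex.exp ((1 - (u : ℂ)) * α + (1 - (u : ℂ) ^ 2) * β / 2) := by
      funext u; rw [KEY u]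
    rw [heq]
    apply Continuous.intervalIntegrable
    fun_prop
  have hFTC := intervalIntegral.integral_eq_sub_of_hasDerivAt (fun t _ => hderiv t) hint
  rw [hFTC]
  have hg1 : (∑ π : Equiv.Perm (Fin n), Complex.exp ((((1:ℝ)) : ℂ) * c π)) *
      Complex.exp ((1 - (((1:ℝ)) : ℂ)) * α + (1 - (((1:ℝ)) : ℂ) ^ 2) * β / 2)
      = ∑ π : Equiv.Perm (Fin n), Complex.exp (c π) := by
    norm_num
  have hg0 : (∑ π : Equiv.Perm (Fin n), Complex.exp ((((0:ℝ)) : ℂ) * c π)) *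
      Complex.exp ((1 - (((0:ℝ)) : ℂ)) * α + (1 - (((0:ℝ)) : ℂ) ^ 2) * β / 2)
      = (n.factorial : ℂ) * Complex.exp (α + β / 2) := by
    norm_num [Finset.sum_const, Finset.card_univ, Fintype.card_perm, mul_comm]
  rw [hg1, hg0]
  have hfac : (n.factorial : ℂ) ≠ 0 := by
    exact_mod_cast Nat.factorial_ne_zero n
  field_simp


end MainThm
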